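/- arXiv:2203.14596 — 5 statements merged into one kernel-verified Lean document; each statement's English description precedes it below -/
import Mathlib

section
/- The key identity in the proof of concavity of Λ: for θ₁ + θ₂ = 1 with θ₁, θ₂ ≥ 0, ρ₁, ρ₂ > 0 and momenta m₁, m₂ ∈ ℝ, Λ(θ₁U₁ + θ₂U₂) - θ₁Λ(U₁) - θ₂Λ(U₂) = (θ₁θ₂ / (θ₁ρ₁ + θ₂ρ₂)) · (m₁√(ρ₂/ρ₁) - m₂√(ρ₁/ρ₂))² / 2, where Uₖ = (ρₖ, mₖ, Eₖ) and Λ(ρ,m,E) = E - m²/(2ρ). -/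
/-- `Λ(ρ, m, E) = E - m²/(2ρ)` -/
noncomputable def Lam (ρ m E : ℝ) : ℝ := E - m^2 / (2 * ρ)

/-- Key identity in the proof of concavity of `Λ`. -/
theorem stmt_1 (θ₁ θ₂ : ℝ) (hθ₁ : 0 ≤ θ₁) (hθ₂ : 0 ≤ θ₂) (hsum : θ₁ + θ₂ = 1)
    (ρ₁ ρ₂ m₁ m₂ E₁ E₂ : ℝ) (hρ₁ : 0 < ρ₁) (hρ₂ : 0 < ρ₂) :
    Lam (θ₁ * ρ₁ + θ₂ * ρ₂) (θ₁ * m₁ + θ₂ * m₂) (θ₁ * E₁ + θ₂ * E₂)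
      - θ₁ * Lam ρ₁ m₁ E₁ - θ₂ * Lam ρ₂ m₂ E₂
    = (θ₁ * θ₂ / (θ₁ * ρ₁ + θ₂ * ρ₂)) *
        (m₁ * Real.sqrt (ρ₂ / ρ₁) - m₂ * Real.sqrt (ρ₁ / ρ₂))^2 / 2 := by
  have hpos : 0 < θ₁ * ρ₁ + θ₂ * ρ₂ := by
    rcases lt_or_eq_of_le hθ₁ with h | h
    · have : 0 ≤ θ₂ * ρ₂ := mul_nonneg hθ₂ hρ₂.le
      nlinarith
    · have hθ₂' : θ₂ = 1 := by linarith
      simp [← h, hθ₂', hρ₂]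
  have h1 : Real.sqrt (ρ₂ / ρ₁) ^ 2 = ρ₂ / ρ₁ :=
    Real.sq_sqrt (le_of_lt (div_pos hρ₂ hρ₁))
  have h2 : Real.sqrt (ρ₁ / ρ₂) ^ 2 = ρ₁ / ρ₂ :=
    Real.sq_sqrt (le_of_lt (div_pos hρ₁ hρ₂))
  have h3 : Real.sqrt (ρ₂ / ρ₁) * Real.sqrt (ρ₁ / ρ₂) = 1 := by
    rw [← Real.sqrt_mul (le_of_lt (div_pos hρ₂ hρ₁))]
    rw [div_mul_div_comm, mul_comm ρ₂ ρ₁, div_self (by positivity), Real.sqrt_one]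
  have key : (m₁ * Real.sqrt (ρ₂ / ρ₁) - m₂ * Real.sqrt (ρ₁ / ρ₂))^2
      = m₁^2 * (ρ₂ / ρ₁) - 2 * m₁ * m₂ + m₂^2 * (ρ₁ / ρ₂) := by
    linear_combination m₁^2 * h1 + m₂^2 * h2 - 2 * m₁ * m₂ * h3
  unfold Lam
  rw [key]
  field_simp
  ring
end

section
/- Let S : (0,∞)³ → ℝ be a concave function that is nondecreasing in its third argument. Then the function η(ρ, q, m, E) = S(ρ, q, E - m²/(2ρ)), defined for ρ > 0 and E - m²/(2ρ) > 0, is concave in (ρ, q, m, E). -/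
private lemma comb_pos {x y a b : ℝ} (hx : 0 < x) (hy : 0 < y)
    (ha : 0 ≤ a) (hb : 0 ≤ b) (hab : a + b = 1) : 0 < a * x + b * y := by
  rcases ha.eq_or_lt with h | h
  · have hb1 : b = 1 := by linarith
    simpa [← h, hb1] using hy
  · nlinarith [mul_nonneg hb hy.le]

private lemma lam_key (ρ ρ' m m' a b : ℝ) (hρ : 0 < ρ) (hρ' : 0 < ρ')
    (ha : 0 ≤ a) (hb : 0 ≤ b) (hab : a + b = 1) :
    (a * m + b * m') ^ 2 / (2 * (a * ρ + b * ρ')) ≤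
      a * (m ^ 2 / (2 * ρ)) + b * (m' ^ 2 / (2 * ρ')) := by
  have hbar : 0 < a * ρ + b * ρ' := comb_pos hρ hρ' ha hb hab
  have hrhs : a * (m ^ 2 / (2 * ρ)) + b * (m' ^ 2 / (2 * ρ'))
      = (a * m ^ 2 * ρ' + b * m' ^ 2 * ρ) / (2 * (ρ * ρ')) := by
    field_simp
  rw [hrhs, div_le_div_iff₀ (by positivity) (by positivity)]
  nlinarith [mul_nonneg (mul_nonneg ha hb) (sq_nonneg (m * ρ' - m' * ρ))]

/-- If `S` is concave on `(0,∞)³` and nondecreasing in its third argument, then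
`η(ρ, q, m, E) = S(ρ, q, E - m²/(2ρ))` is concave on its natural domain. -/
theorem stmt_4 (S : ℝ → ℝ → ℝ → ℝ)
    (hconc : ConcaveOn ℝ {p : ℝ × ℝ × ℝ | 0 < p.1 ∧ 0 < p.2.1 ∧ 0 < p.2.2}
      (fun p => S p.1 p.2.1 p.2.2))
    (hmono : ∀ ρ q : ℝ, 0 < ρ → 0 < q →
      ∀ e₁ e₂ : ℝ, 0 < e₁ → e₁ ≤ e₂ → S ρ q e₁ ≤ S ρ q e₂) :
    ConcaveOn ℝ
      {p : ℝ × ℝ × ℝ × ℝ | 0 < p.1 ∧ 0 < p.2.1 ∧ 0 < p.2.2.2 - p.2.2.1^2 / (2 * p.1)}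
      (fun p => S p.1 p.2.1 (p.2.2.2 - p.2.2.1^2 / (2 * p.1))) := by
  have key : ∀ (p p' : ℝ × ℝ × ℝ × ℝ),
      (0 < p.1 ∧ 0 < p.2.1 ∧ 0 < p.2.2.2 - p.2.2.1^2 / (2 * p.1)) →
      (0 < p'.1 ∧ 0 < p'.2.1 ∧ 0 < p'.2.2.2 - p'.2.2.1^2 / (2 * p'.1)) →
      ∀ a b : ℝ, 0 ≤ a → 0 ≤ b → a + b = 1 →
      (0 < a * p.1 + b * p'.1 ∧ 0 < a * p.2.1 + b * p'.2.1 ∧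
        0 < (a * p.2.2.2 + b * p'.2.2.2) -
          (a * p.2.2.1 + b * p'.2.2.1) ^ 2 / (2 * (a * p.1 + b * p'.1))) ∧
      a * S p.1 p.2.1 (p.2.2.2 - p.2.2.1 ^ 2 / (2 * p.1)) +
        b * S p'.1 p'.2.1 (p'.2.2.2 - p'.2.2.1 ^ 2 / (2 * p'.1)) ≤
      S (a * p.1 + b * p'.1) (a * p.2.1 + b * p'.2.1)
        ((a * p.2.2.2 + b * p'.2.2.2) -
          (a * p.2.2.1 + b * p'.2.2.1) ^ 2 / (2 * (a * p.1 + b * p'.1))) := by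
    rintro ⟨ρ, q, m, E⟩ ⟨ρ', q', m', E'⟩ ⟨hρ, hq, hΛ⟩ ⟨hρ', hq', hΛ'⟩ a b ha hb hab
    dsimp only at *
    set Λ := E - m ^ 2 / (2 * ρ) with hΛdef
    set Λ' := E' - m' ^ 2 / (2 * ρ') with hΛ'def
    have hbarρ : 0 < a * ρ + b * ρ' := comb_pos hρ hρ' ha hb hab
    have hbarq : 0 < a * q + b * q' := comb_pos hq hq' ha hb hab
    have hcomb : 0 < a * Λ + b * Λ' := comb_pos hΛ hΛ' ha hb hab
    have hkey := lam_key ρ ρ' m m' a b hρ hρ' ha hb hab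
    have hge : a * Λ + b * Λ' ≤
        (a * E + b * E') - (a * m + b * m') ^ 2 / (2 * (a * ρ + b * ρ')) := by
      rw [hΛdef, hΛ'def]; nlinarith
    refine ⟨⟨hbarρ, hbarq, lt_of_lt_of_le hcomb hge⟩, ?_⟩
    have hS1 : a * S ρ q Λ + b * S ρ' q' Λ' ≤
        S (a * ρ + b * ρ') (a * q + b * q') (a * Λ + b * Λ') := by
      have := hconc.2 (x := (ρ, q, Λ)) (y := (ρ', q', Λ'))
        ⟨hρ, hq, hΛ⟩ ⟨hρ', hq', hΛ'⟩ ha hb hab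
      simpa [Prod.smul_mk, smul_eq_mul] using this
    have hS2 := hmono (a * ρ + b * ρ') (a * q + b * q') hbarρ hbarq
      (a * Λ + b * Λ')
      ((a * E + b * E') - (a * m + b * m') ^ 2 / (2 * (a * ρ + b * ρ')))
      hcomb hge
    linarith
  refine ⟨?_, ?_⟩
  · rintro p hp p' hp' a b ha hb hab
    have := (key p p' hp hp' a b ha hb hab).1
    simpa [Prod.smul_mk, smul_eq_mul, Prod.mk_add_mk, Set.mem_setOf_eq] using this
  · rintro p hp p' hp' a b ha hb hab
    have := (key p p' hp hp' a b ha hb hab).2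
    simpa [Prod.smul_mk, smul_eq_mul, Prod.mk_add_mk, Set.mem_setOf_eq] using this
end

section
/- In the advection step of the FSLP scheme, the specific volume update is a convex combination: if ρ_j 𝒯_j = 1 for all j, ρ_j^A > 0, and 𝒯_j^A := (ρ_j 𝒯_j - λ(u₊⁺·ρ_j𝒯_j + u₊⁻·ρ_{j+1}𝒯_{j+1} - u₋⁺·ρ_{j-1}𝒯_{j-1} - u₋⁻·ρ_j𝒯_j)) / ρ_j^A with ρ_j^A = ρ_j - λ(u₊⁻ρ_{j+1} + u₊⁺ρ_j - u₋⁺ρ_{j-1} - u₋⁻ρ_j), where u₊ = u*_{j+1/2}, u₋ = u*_{j-1/2}, x⁺ = max(x,0), x⁻ = min(x,0), λ = Δt/((1-α)Δx), then 𝒯_j^A = λ_j^{(+1)}𝒯_{j+1} + λ_j^{(0)}𝒯_j + λ_j^{(-1)}𝒯_{j-1} where λ_j^{(+1)} = -λ u₊⁻ ρ_{j+1}/ρ_j^A, λ_j^{(-1)} = λ u₋⁺ ρ_{j-1}/ρ_j^A, λ_j^{(0)} = (1 - λ(u₊⁺ - u₋⁻)) ρ_j/ρ_j^A, and λ^{(+1)}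 + λ^{(0)} + λ^{(-1)} = 1. -/
/-- The FSLP advection update of the surrogate specific volume `𝒯` is a convex
combination of its neighboring values. -/
theorem stmt_7 (ρm ρ0 ρp Tm T0 Tp lam up um ρA : ℝ)
    (hm : ρm * Tm = 1) (h0 : ρ0 * T0 = 1) (hp : ρp * Tp = 1)
    (hρA : ρA = ρ0 - lam * (min up 0 * ρp + max up 0 * ρ0 - max um 0 * ρm - min um 0 * ρ0))
    (hApos : 0 < ρA)
    (TA : ℝ)
    (hTA : TA = (ρ0 * T0 - lam * (max up 0 * (ρ0 * T0) + min up 0 * (ρp * Tp)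
      - max um 0 * (ρm * Tm) - min um 0 * (ρ0 * T0))) / ρA) :
    TA = (-(lam * min up 0) * ρp / ρA) * Tp
        + ((1 - lam * (max up 0 - min um 0)) * ρ0 / ρA) * T0
        + ((lam * max um 0) * ρm / ρA) * Tm ∧
      (-(lam * min up 0) * ρp / ρA)
        + ((1 - lam * (max up 0 - min um 0)) * ρ0 / ρA)
        + ((lam * max um 0) * ρm / ρA) = 1 := by
  have hA : ρA ≠ 0 := ne_of_gt hApos
  have hρp : ρp ≠ 0 := fun h => by simp [h] at hp
  have hρm : ρm ≠ 0 := fun h => by simp [h] at hm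
  have hρ0 : ρ0 ≠ 0 := fun h => by simp [h] at h0
  have hTp : Tp = ρp⁻¹ := by field_simp; linarith
  have hTm : Tm = ρm⁻¹ := by field_simp; linarith
  have hT0 : T0 = ρ0⁻¹ := by field_simp; linarith
  subst hTp hTm hT0
  constructor
  · rw [hTA]
    field_simp
    linear_combination
  · rw [hρA] at hA ⊢
    rw [← add_div, ← add_div, div_eq_one_iff_eq hA]
    ring
end

section
/- Under the transport CFL condition 1 - λ(u₊⁺ - u₋⁻) ≥ 0 (with λ = Δt/((1-α)Δx), u₊ = u*_{j+1/2}, u₋ = u*_{j-1/2}), the updated density ρ_j^A = ρ_j - λ(u₊⁻ρ_{j+1} + u₊⁺ρ_j - u₋⁺ρ_{j-1} - u₋⁻ρ_j) is a nonnegative linear combination of ρ_{j-1}, ρ_j, ρ_{j+1}; in particular if ρ_{j-1}, ρ_j, ρ_{j+1} > 0 and the CFL inequality is strict, then ρ_j^A > 0. -/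
/-- Under the transport CFL condition the advected density is a nonnegative
combination of the neighboring densities; positivity under strict CFL. -/
theorem stmt_8 (ρm ρ0 ρp lam up um : ℝ) (hlam : 0 < lam)
    (hCFL : 0 ≤ 1 - lam * (max up 0 - min um 0)) :
    (0 ≤ -(lam * min up 0) ∧ 0 ≤ lam * max um 0 ∧ 0 ≤ 1 - lam * (max up 0 - min um 0)) ∧
      (0 < ρm → 0 < ρ0 → 0 < ρp → 0 < 1 - lam * (max up 0 - min um 0) →
        0 < ρ0 - lam * (min up 0 * ρp + max up 0 * ρ0 - max um 0 * ρm - min um 0 * ρ0)) := by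
  have h1 : 0 ≤ -(lam * min up 0) := by
    have := min_le_right up (0:ℝ); nlinarith
  have h2 : 0 ≤ lam * max um 0 := by
    have := le_max_right um (0:ℝ); positivity
  refine ⟨⟨h1, h2, hCFL⟩, ?_⟩
  intro hm h0 hp hstrict
  have key : ρ0 - lam * (min up 0 * ρp + max up 0 * ρ0 - max um 0 * ρm - min um 0 * ρ0)
      = -(lam * min up 0) * ρp + lam * max um 0 * ρm
        + (1 - lam * (max up 0 - min um 0)) * ρ0 := by ring
  rw [key]
  have := mul_nonneg h1 hp.le
  have := mul_nonneg h2 hm.le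
  nlinarith
end

section
/- For the pressure subsystem's intermediate states, one has the sign result of the function χ: assume p^EOS(·, s_R) is C¹ and strictly decreasing on an interval containing 𝒯_R and 𝒯_R*, and that 1 - (ρc)²(𝒯, s_R)/a² > 0 for all such 𝒯 (i.e., a dominates the Lagrangian sound speed). Define χ(𝒯) = e^EOS(𝒯, s_R) - p^EOS(𝒯, s_R)²/(2a²) - e^EOS(𝒯_R*, s_R) + p^EOS(𝒯_R*, s_R)²/(2a²) + p^EOS(𝒯_R*, s_R)(𝒯 + p^EOS(𝒯,s_R)/a² - 𝒯_R* - p^EOS(𝒯_R*,s_R)/a²). If χ'(𝒯) = (p^EOS(𝒯_R*, s_R) - p^EOS(𝒯, s_R))(1 - ρ²c²(𝒯, s_R)/a²) and 𝒯_R ≠ 𝒯_R*, then χ(𝒯_R) > 0. -/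
open Set in
/-- Sign of the function `χ` in the entropy estimate for the pressure subsystem. -/
theorem stmt_12 (a TR TRs : ℝ) (ha : 0 < a) (hne : TR ≠ TRs)
    (eEOS pEOS rc2 : ℝ → ℝ)
    (hp : StrictAntiOn pEOS (Set.uIcc TRs TR))
    (hrc : ∀ T ∈ Set.uIcc TRs TR, 0 < 1 - rc2 T / a^2)
    (χ : ℝ → ℝ)
    (hχ : χ = fun T => eEOS T - (pEOS T)^2 / (2 * a^2) - eEOS TRs + (pEOS TRs)^2 / (2 * a^2)
      + pEOS TRs * (T + pEOS T / a^2 - TRs - pEOS TRs / a^2))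
    (hχ' : ∀ T ∈ Set.uIcc TRs TR,
      HasDerivAt χ ((pEOS TRs - pEOS T) * (1 - rc2 T / a^2)) T) :
    0 < χ TR := by
  have hχ0 : χ TRs = 0 := by simp [hχ]
  have hcont : ContinuousOn χ (Set.uIcc TRs TR) := fun x hx =>
    ((hχ' x hx).continuousAt).continuousWithinAt
  have hderiv : ∀ T ∈ Set.uIcc TRs TR,
      deriv χ T = (pEOS TRs - pEOS T) * (1 - rc2 T / a^2) := fun T hT =>
    (hχ' T hT).deriv
  rcases lt_or_gt_of_ne hne with h | h
  · -- TR < TRs : χ strictly decreasing on [TR, TRs]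
    have huIcc : Set.uIcc TRs TR = Set.Icc TR TRs := by
      rw [Set.uIcc_comm, Set.uIcc_of_le h.le]
    have hmono : StrictAntiOn χ (Set.Icc TR TRs) := by
      apply strictAntiOn_of_deriv_neg (convex_Icc _ _) (huIcc ▸ hcont)
      intro x hx
      rw [interior_Icc] at hx
      have hxm : x ∈ Set.uIcc TRs TR := huIcc ▸ Set.Ioo_subset_Icc_self hx
      rw [hderiv x hxm]
      have hTRs : TRs ∈ Set.uIcc TRs TR := Set.left_mem_uIcc
      have hplt : pEOS TRs < pEOS x := hp hxm hTRs hx.2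
      exact mul_neg_of_neg_of_pos (by linarith) (hrc x hxm)
    have := hmono (Set.left_mem_Icc.2 h.le) (Set.right_mem_Icc.2 h.le) h
    linarith [hχ0 ▸ this]
  · have huIcc : Set.uIcc TRs TR = Set.Icc TRs TR := Set.uIcc_of_le h.le
    have hmono : StrictMonoOn χ (Set.Icc TRs TR) := by
      apply strictMonoOn_of_deriv_pos (convex_Icc _ _) (huIcc ▸ hcont)
      intro x hx
      rw [interior_Icc] at hx
      have hxm : x ∈ Set.uIcc TRs TR := huIcc ▸ Set.Ioo_subset_Icc_self hx
      rw [hderiv x hxm]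
      have hTRs : TRs ∈ Set.uIcc TRs TR := Set.left_mem_uIcc
      have hplt : pEOS x < pEOS TRs := hp hTRs hxm hx.1
      exact mul_pos (by linarith) (hrc x hxm)
    have := hmono (Set.left_mem_Icc.2 h.le) (Set.right_mem_Icc.2 h.le) h
    linarith [hχ0 ▸ this]
end
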